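/- Let p ≥ 2 be an integer, let λ_1 > λ_2 > ⋯ > λ_p > 0 be real numbers, and let 0 ≤ r ≤ p−1. Define σ_r*² = (1/(p−r))∑_{ℓ=r+1}^p λ_ℓ, the GIC complexity b_r^{GIC} = [C(r,2) + ∑_{j=1}^r ∑_{ℓ=r+1}^p λ_ℓ(λ_j − σ_r*²)/(σ_r*²(λ_j − λ_ℓ))] + r + [(1/(p−r))∑_{ℓ=r+1}^p λ_ℓ²]/(σ_r*²)² + p, and the free-parameter count b_r = [pr − r(r+1)/2] + r + 1 + p. Then b_r^{GIC} ≥ b_r. -/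

import Mathlib

open Finset

private lemma tangent_aux (c s x : ℝ) (hx : 0 < x) (hxc : x < c) (hs : 0 < s) (hsc : s < c) :
    s / (c - s) + c * (x - s) / (c - s) ^ 2 ≤ x / (c - x) := by
  have h1 : 0 < c - x := by linarith
  have h2 : 0 < c - s := by linarith
  have hc : 0 < c := by linarith
  have key : x / (c - x) - (s / (c - s) + c * (x - s) / (c - s) ^ 2)
      = c * (x - s) ^ 2 / ((c - x) * (c - s) ^ 2) := by
    field_simp
    ring
  have h3 : 0 ≤ c * (x - s) ^ 2 / ((c - x) * (c - s) ^ 2) := by positivity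
  linarith

/-- The GIC model complexity `b_r^GIC` of the rank-`r` simple spiked working model is at
least the number of free parameters `b_r`, for eigenvalues `λ 1 > ⋯ > λ p > 0` and
`0 ≤ r ≤ p - 1`. -/
theorem stmt1 (p r : ℕ) (hp : 2 ≤ p) (hrp : r ≤ p - 1)
    (lam : ℕ → ℝ)
    (hdec : ∀ i j : ℕ, 1 ≤ i → i < j → j ≤ p → lam j < lam i)
    (hpos : 0 < lam p)
    (s2 : ℝ) (hs2 : s2 = (1 / ((p : ℝ) - (r : ℝ))) * ∑ l ∈ Finset.Icc (r + 1) p, lam l)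
    (bGIC : ℝ)
    (hbGIC : bGIC =
      (((r : ℝ) * ((r : ℝ) - 1) / 2) +
        ∑ j ∈ Finset.Icc 1 r, ∑ l ∈ Finset.Icc (r + 1) p,
          lam l * (lam j - s2) / (s2 * (lam j - lam l)))
      + (r : ℝ)
      + ((1 / ((p : ℝ) - (r : ℝ))) * ∑ l ∈ Finset.Icc (r + 1) p, (lam l) ^ 2) / s2 ^ 2
      + (p : ℝ))
    (br : ℝ)
    (hbr : br = ((p : ℝ) * (r : ℝ) - (r : ℝ) * ((r : ℝ) + 1) / 2) + (r : ℝ) + 1 + (p : ℝ)) :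
    bGIC ≥ br := by
  have hrp' : r < p := by omega
  set T : Finset ℕ := Finset.Icc (r + 1) p with hT
  set m : ℝ := (p : ℝ) - (r : ℝ) with hmdef
  have hm : (0 : ℝ) < m := by
    have : (r : ℝ) < (p : ℝ) := by exact_mod_cast hrp'
    simp only [hmdef]; linarith
  have hcardR : (T.card : ℝ) = m := by
    rw [hT, Nat.card_Icc]
    have : p + 1 - (r + 1) = p - r := by omega
    rw [this, Nat.cast_sub hrp'.le]
  have hne : T.Nonempty := by
    rw [hT]; exact Finset.nonempty_Icc.mpr (by omega)
  have hlam_pos : ∀ l ∈ T, 0 < lam l := by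
    intro l hl
    obtain ⟨hl1, hl2⟩ := Finset.mem_Icc.mp hl
    rcases eq_or_lt_of_le hl2 with h | h
    · rw [h]; exact hpos
    · exact lt_trans hpos (hdec l p (by omega) h le_rfl)
  have hTsum : ∑ l ∈ T, lam l = m * s2 := by
    rw [hs2]
    field_simp
  have hs2pos : 0 < s2 := by
    have hsumpos : 0 < ∑ l ∈ T, lam l := Finset.sum_pos hlam_pos hne
    rw [hs2]
    exact mul_pos (one_div_pos.mpr hm) hsumpos
  -- second moment bound
  have hQ : m * s2 ^ 2 ≤ ∑ l ∈ T, (lam l) ^ 2 := by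
    have h0 : 0 ≤ ∑ l ∈ T, (lam l - s2) ^ 2 :=
      Finset.sum_nonneg fun l _ => sq_nonneg _
    have hexp : ∑ l ∈ T, (lam l - s2) ^ 2
        = ∑ l ∈ T, (lam l) ^ 2 - 2 * s2 * (∑ l ∈ T, lam l) + (T.card : ℝ) * s2 ^ 2 := by
      rw [Finset.sum_congr rfl (fun l _ => by ring :
        ∀ l ∈ T, (lam l - s2) ^ 2 = (lam l) ^ 2 - 2 * s2 * lam l + s2 ^ 2)]
      rw [Finset.sum_add_distrib, Finset.sum_sub_distrib, ← Finset.mul_sum,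
        Finset.sum_const, nsmul_eq_mul]
    rw [hcardR, hTsum] at hexp
    nlinarith [h0, hexp]
  have hQ' : (1 : ℝ) ≤ ((1 / m) * ∑ l ∈ T, (lam l) ^ 2) / s2 ^ 2 := by
    rw [le_div_iff₀ (by positivity : (0:ℝ) < s2 ^ 2), one_mul, one_div, inv_mul_eq_div,
      le_div_iff₀ hm]
    linarith
  -- per-j bound on inner sums
  have hSj : ∀ j ∈ Finset.Icc 1 r,
      m ≤ ∑ l ∈ T, lam l * (lam j - s2) / (s2 * (lam j - lam l)) := by
    intro j hj
    obtain ⟨hj1, hjr⟩ := Finset.mem_Icc.mp hj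
    set c : ℝ := lam j with hc
    have hcl : ∀ l ∈ T, lam l < c := by
      intro l hl
      obtain ⟨hl1, hl2⟩ := Finset.mem_Icc.mp hl
      exact hdec j l hj1 (by omega) hl2
    have hs2c : s2 < c := by
      have hlt : ∑ l ∈ T, lam l < ∑ l ∈ T, c :=
        Finset.sum_lt_sum_of_nonempty hne hcl
      rw [Finset.sum_const, nsmul_eq_mul, hcardR, hTsum] at hlt
      nlinarith [hlt, hm]
    have hcs : 0 < c - s2 := by linarith
    have h2 : m * (s2 / (c - s2)) ≤ ∑ l ∈ T, lam l / (c - lam l) := by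
      have heq : ∑ l ∈ T, (s2 / (c - s2) + c * (lam l - s2) / (c - s2) ^ 2)
          = m * (s2 / (c - s2)) := by
        rw [Finset.sum_add_distrib, Finset.sum_const, nsmul_eq_mul, hcardR]
        have e : ∑ l ∈ T, c * (lam l - s2) / (c - s2) ^ 2
            = (c / (c - s2) ^ 2) * ((∑ l ∈ T, lam l) - (T.card : ℝ) * s2) := by
          rw [Finset.sum_congr rfl (fun l _ => by ring :
            ∀ l ∈ T, c * (lam l - s2) / (c - s2) ^ 2
              = c / (c - s2) ^ 2 * lam l - c / (c - s2) ^ 2 * s2)]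
          rw [Finset.sum_sub_distrib, ← Finset.mul_sum, Finset.sum_const, nsmul_eq_mul]
          ring
        rw [e, hcardR, hTsum]
        ring
      calc m * (s2 / (c - s2))
          = ∑ l ∈ T, (s2 / (c - s2) + c * (lam l - s2) / (c - s2) ^ 2) := heq.symm
        _ ≤ ∑ l ∈ T, lam l / (c - lam l) :=
            Finset.sum_le_sum fun l hl =>
              tangent_aux c s2 (lam l) (hlam_pos l hl) (hcl l hl) hs2pos hs2c
    have h3 : ∑ l ∈ T, lam l * (c - s2) / (s2 * (c - lam l))
        = ((c - s2) / s2) * ∑ l ∈ T, lam l / (c - lam l) := by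
      rw [Finset.mul_sum]
      refine Finset.sum_congr rfl fun l hl => ?_
      have : lam l < c := hcl l hl
      field_simp
    rw [h3]
    have h4 : m * (s2 / (c - s2)) * ((c - s2) / s2) = m := by
      field_simp
    calc m = m * (s2 / (c - s2)) * ((c - s2) / s2) := h4.symm
      _ ≤ (∑ l ∈ T, lam l / (c - lam l)) * ((c - s2) / s2) := by
          apply mul_le_mul_of_nonneg_right h2 (by positivity)
      _ = ((c - s2) / s2) * ∑ l ∈ T, lam l / (c - lam l) := by ring
  have hS : (r : ℝ) * m ≤ ∑ j ∈ Finset.Icc 1 r, ∑ l ∈ T,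
      lam l * (lam j - s2) / (s2 * (lam j - lam l)) := by
    calc (r : ℝ) * m = ∑ _j ∈ Finset.Icc 1 r, m := by
          rw [Finset.sum_const, nsmul_eq_mul, Nat.card_Icc]
          norm_num
      _ ≤ _ := Finset.sum_le_sum hSj
  have hrm : (r : ℝ) * m = (p : ℝ) * r - (r : ℝ) * r := by
    rw [hmdef]; ring
  rw [hbGIC, hbr]
  nlinarith [hS, hQ', hrm]
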